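/- Let w₁,…,w_N ≥ 0 be weights, let I ⊆ {1,…,N} with Σ_{i∉I} wᵢ ≤ p and |1 − Σ_{i∈I} wᵢ| ≤ p for some p ≥ 0, and let V : Θ → ℝ be a Lipschitz function with constant κ_v on a set of diameter D, with V bounded by V_max ≥ 0. Suppose design points θ₁,…,θ_N ∈ Θ satisfy ‖θ − θᵢ‖ ≤ r for all i ∈ I, for some prediction point θ ∈ Θ and r ≥ 0. Then |Σ_{i=1}^N wᵢ V(θᵢ) − V(θ)| ≤ (1+p) κ_v r + p κ_v D + 2 p V_max. -/
import Mathlib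


/-- Bias bound for a linear smoother: if the nonnegative weights place mass at most `p`
outside the index set `I`, total weight on `I` within `p` of `1`, the design points
indexed by `I` lie within distance `r` of the prediction point `θ`, `V` is `κ_v`-Lipschitz
on a set `Θ` of diameter at most `D` and bounded by `V_max`, then
`|Σᵢ wᵢ V(θᵢ) − V(θ)| ≤ (1+p) κ_v r + p κ_v D + 2 p V_max`. -/
theorem linear_smoother_bias_bound
    {E : Type*} [NormedAddCommGroup E] {N : ℕ} (Θ : Set E)
    (w : Fin N → ℝ) (hw : ∀ i, 0 ≤ w i)
    (I : Finset (Fin N)) (p : ℝ) (hp : 0 ≤ p)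
    (hout : ∑ i ∈ Iᶜ, w i ≤ p)
    (hin : |1 - ∑ i ∈ I, w i| ≤ p)
    (V : E → ℝ) (κv : ℝ) (hκv : 0 ≤ κv)
    (hLip : ∀ x ∈ Θ, ∀ y ∈ Θ, |V x - V y| ≤ κv * ‖x - y‖)
    (D : ℝ) (hD : ∀ x ∈ Θ, ∀ y ∈ Θ, ‖x - y‖ ≤ D)
    (Vmax : ℝ) (hVmax : 0 ≤ Vmax) (hVbd : ∀ x ∈ Θ, |V x| ≤ Vmax)
    (θ : E) (hθ : θ ∈ Θ) (θs : Fin N → E) (hθs : ∀ i, θs i ∈ Θ)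
    (r : ℝ) (hr : 0 ≤ r) (hnear : ∀ i ∈ I, ‖θ - θs i‖ ≤ r) :
    |(∑ i, w i * V (θs i)) - V θ|
      ≤ (1 + p) * κv * r + p * κv * D + 2 * p * Vmax := by
  set S1 := ∑ i ∈ I, w i with hS1
  have hsplit : (∑ i, w i * V (θs i))
      = (∑ i ∈ I, w i * V (θs i)) + ∑ i ∈ Iᶜ, w i * V (θs i) :=
    (Finset.sum_add_sum_compl I _).symm
  have hid : (∑ i, w i * V (θs i)) - V θ
      = (∑ i ∈ I, w i * (V (θs i) - V θ)) + (S1 - 1) * V θ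
        + ∑ i ∈ Iᶜ, w i * V (θs i) := by
    rw [hsplit]
    simp only [mul_sub, Finset.sum_sub_distrib, ← Finset.sum_mul, hS1]
    ring
  have hS1le : S1 ≤ 1 + p := by
    have := abs_le.mp hin
    linarith [this.1]
  have hb1 : |∑ i ∈ I, w i * (V (θs i) - V θ)| ≤ (1 + p) * κv * r := by
    calc |∑ i ∈ I, w i * (V (θs i) - V θ)|
        ≤ ∑ i ∈ I, |w i * (V (θs i) - V θ)| := Finset.abs_sum_le_sum_abs _ _
      _ ≤ ∑ i ∈ I, w i * (κv * r) := by
          refine Finset.sum_le_sum fun i hi => ?_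
          rw [abs_mul, abs_of_nonneg (hw i)]
          refine mul_le_mul_of_nonneg_left ?_ (hw i)
          calc |V (θs i) - V θ| ≤ κv * ‖θs i - θ‖ := hLip _ (hθs i) _ hθ
            _ ≤ κv * r := by
                refine mul_le_mul_of_nonneg_left ?_ hκv
                rw [← norm_neg]; simpa using hnear i hi
      _ = S1 * (κv * r) := by rw [← Finset.sum_mul]
      _ ≤ (1 + p) * (κv * r) := by
          refine mul_le_mul_of_nonneg_right hS1le (by positivity)
      _ = (1 + p) * κv * r := by ring
  have hb2 : |(S1 - 1) * V θ| ≤ p * Vmax := by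
    rw [abs_mul]
    have h1 : |S1 - 1| ≤ p := by rw [abs_sub_comm]; exact hin
    exact mul_le_mul h1 (hVbd θ hθ) (abs_nonneg _) hp
  have hb3 : |∑ i ∈ Iᶜ, w i * V (θs i)| ≤ p * Vmax := by
    calc |∑ i ∈ Iᶜ, w i * V (θs i)|
        ≤ ∑ i ∈ Iᶜ, |w i * V (θs i)| := Finset.abs_sum_le_sum_abs _ _
      _ ≤ ∑ i ∈ Iᶜ, w i * Vmax := by
          refine Finset.sum_le_sum fun i _ => ?_
          rw [abs_mul, abs_of_nonneg (hw i)]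
          exact mul_le_mul_of_nonneg_left (hVbd _ (hθs i)) (hw i)
      _ = (∑ i ∈ Iᶜ, w i) * Vmax := by rw [← Finset.sum_mul]
      _ ≤ p * Vmax := mul_le_mul_of_nonneg_right hout hVmax
  have hDpos : 0 ≤ D := le_trans (norm_nonneg _) (hD θ hθ θ hθ)
  have hpkD : 0 ≤ p * κv * D := by positivity
  calc |(∑ i, w i * V (θs i)) - V θ|
      = |(∑ i ∈ I, w i * (V (θs i) - V θ)) + (S1 - 1) * V θ
          + ∑ i ∈ Iᶜ, w i * V (θs i)| := by rw [hid]
    _ ≤ |(∑ i ∈ I, w i * (V (θs i) - V θ)) + (S1 - 1) * V θ|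
          + |∑ i ∈ Iᶜ, w i * V (θs i)| := abs_add_le _ _
    _ ≤ |∑ i ∈ I, w i * (V (θs i) - V θ)| + |(S1 - 1) * V θ|
          + |∑ i ∈ Iᶜ, w i * V (θs i)| := by linarith [abs_add_le (∑ i ∈ I, w i * (V (θs i) - V θ)) ((S1 - 1) * V θ)]
    _ ≤ (1 + p) * κv * r + p * Vmax + p * Vmax := by linarith
    _ ≤ (1 + p) * κv * r + p * κv * D + 2 * p * Vmax := by linarith
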